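/- Let f : 2^Ω → ℝ≥0 be submodular with f(∅) = 0. Run the threshold algorithm with parameters (τ, k): process elements in any order and select each element whose marginal value with respect to the current selection is at least τ, stopping after k selections. The returned set S either has |S| = k and f(S) ≥ τ·k, or satisfies f(S) ≥ f(S ∪ C*) − |C*|·τ for every set C* ⊆ Ω. -/

import Mathlib

open Finset

def Submodular {Ω : Type*} [DecidableEq Ω] (f : Finset Ω → ℝ) : Prop :=
  ∀ S T : Finset Ω, f (S ∪ T) + f (S ∩ T) ≤ f S + f T

-- One step of the threshold algorithm with parameters `(τ, k)`: add the arriving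
-- element if fewer than `k` selections are selected and its marginal value is ≥ τ.
open scoped Classical in
noncomputable def thresholdStep {Ω : Type*} [DecidableEq Ω] (f : Finset Ω → ℝ)
    (τ : ℝ) (k : ℕ) (S : Finset Ω) (e : Ω) : Finset Ω :=
  if S.card < k ∧ τ ≤ f (insert e S) - f S then insert e S else S

section Aux

variable {Ω : Type*} [DecidableEq Ω] (f : Finset Ω → ℝ) (τ : ℝ) (k : ℕ)

lemma step_subset (S : Finset Ω) (e : Ω) : S ⊆ thresholdStep f τ k S e := by
  unfold thresholdStep
  split_ifs
  · exact Finset.subset_insert _ _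
  · exact subset_rfl

lemma foldl_subset : ∀ (l : List Ω) (S : Finset Ω),
    S ⊆ l.foldl (thresholdStep f τ k) S
  | [], _ => subset_rfl
  | x :: l, S => (step_subset f τ k S x).trans (foldl_subset l _)

lemma foldl_card_le : ∀ (l : List Ω) (S : Finset Ω), S.card ≤ k →
    (l.foldl (thresholdStep f τ k) S).card ≤ k
  | [], _, h => h
  | x :: l, S, h => by
    apply foldl_card_le l
    unfold thresholdStep
    split_ifs with hc
    · exact (Finset.card_insert_le _ _).trans hc.1
    · exact h

lemma foldl_value (hτ : 0 < τ) : ∀ (l : List Ω) (S : Finset Ω),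
    τ * S.card ≤ f S →
    τ * ((l.foldl (thresholdStep f τ k) S).card : ℝ) ≤ f (l.foldl (thresholdStep f τ k) S)
  | [], _, h => h
  | x :: l, S, h => by
    apply foldl_value hτ l
    unfold thresholdStep
    split_ifs with hc
    · have h1 : ((insert x S).card : ℝ) ≤ (S.card : ℝ) + 1 := by
        exact_mod_cast Finset.card_insert_le _ _
      calc τ * ((insert x S).card : ℝ) ≤ τ * ((S.card : ℝ) + 1) := by
            exact mul_le_mul_of_nonneg_left h1 hτ.le
        _ = τ * S.card + τ := by ring
        _ ≤ f S + (f (insert x S) - f S) := add_le_add h hc.2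
        _ = f (insert x S) := by ring
    · exact h

lemma rejection : ∀ (l : List Ω) (A : Finset Ω) (e : Ω),
    e ∈ l → e ∉ l.foldl (thresholdStep f τ k) A →
    (l.foldl (thresholdStep f τ k) A).card < k →
    ∃ B, B ⊆ l.foldl (thresholdStep f τ k) A ∧ f (insert e B) - f B < τ
  | [], _, _, he, _, _ => absurd he List.not_mem_nil
  | x :: l, A, e, he, heT, hcard => by
    simp only [List.foldl_cons] at heT hcard ⊢
    rcases List.mem_cons.mp he with rfl | he'
    · -- e = x
      have hsub : thresholdStep f τ k A e ⊆ l.foldl (thresholdStep f τ k) (thresholdStep f τ k A e) :=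
        foldl_subset f τ k l _
      by_cases hc : A.card < k ∧ τ ≤ f (insert e A) - f A
      · exfalso
        apply heT
        apply hsub
        unfold thresholdStep
        rw [if_pos hc]
        exact Finset.mem_insert_self _ _
      · have hAstep : thresholdStep f τ k A e = A := by
          unfold thresholdStep; rw [if_neg hc]
        rw [hAstep] at heT hcard ⊢
        have hAsub : A ⊆ l.foldl (thresholdStep f τ k) A := foldl_subset f τ k l A
        have hA : A.card < k := lt_of_le_of_lt (Finset.card_le_card hAsub) hcard
        push_neg at hc
        exact ⟨A, hAsub, hc hA⟩
    · exact rejection l (thresholdStep f τ k A x) e he' heT hcard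

end Aux

lemma marg_mono {Ω : Type*} [DecidableEq Ω] {f : Finset Ω → ℝ} (hsub : Submodular f)
    {B T : Finset Ω} (hBT : B ⊆ T) {e : Ω} (he : e ∉ T) :
    f (insert e T) - f T ≤ f (insert e B) - f B := by
  have h := hsub (insert e B) T
  have h1 : insert e B ∪ T = insert e T := by
    ext a; simp only [Finset.mem_union, Finset.mem_insert]
    constructor
    · rintro ((rfl | h) | h)
      · exact Or.inl rfl
      · exact Or.inr (hBT h)
      · exact Or.inr h
    · rintro (rfl | h)
      · exact Or.inl (Or.inl rfl)
      · exact Or.inr h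
  have h2 : insert e B ∩ T = B := by
    ext a; simp only [Finset.mem_inter, Finset.mem_insert]
    constructor
    · rintro ⟨rfl | h, hT⟩
      · exact absurd hT he
      · exact h
    · exact fun h => ⟨Or.inr h, hBT h⟩
  rw [h1, h2] at h
  linarith

lemma sum_marg {Ω : Type*} [DecidableEq Ω] {f : Finset Ω → ℝ} (hsub : Submodular f)
    {S : Finset Ω} {τ : ℝ} (hτ : 0 ≤ τ)
    (H : ∀ e : Ω, e ∉ S → f (insert e S) - f S < τ) :
    ∀ C : Finset Ω, f (S ∪ C) ≤ f S + ((C \ S).card : ℝ) * τ := by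
  intro C
  induction C using Finset.induction_on with
  | empty => simp
  | @insert a C' ha ih =>
    by_cases haS : a ∈ S
    · have h1 : S ∪ insert a C' = S ∪ C' := by
        rw [Finset.union_insert, Finset.insert_eq_self.mpr (Finset.mem_union_left _ haS)]
      have h2 : insert a C' \ S = C' \ S := by
        ext x; simp only [Finset.mem_sdiff, Finset.mem_insert]
        constructor
        · rintro ⟨rfl | h, hx⟩
          · exact absurd haS hx
          · exact ⟨h, hx⟩
        · exact fun ⟨h, hx⟩ => ⟨Or.inr h, hx⟩
      rw [h1, h2]; exact ih
    · have haSC' : a ∉ S ∪ C' := by simp [haS, ha]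
      have h1 : S ∪ insert a C' = insert a (S ∪ C') := by
        rw [Finset.union_insert]
      have hkey := hsub (insert a S) (S ∪ C')
      have hu : insert a S ∪ (S ∪ C') = insert a (S ∪ C') := by
        rw [Finset.insert_union, ← Finset.union_assoc, Finset.union_self]
      have hi : insert a S ∩ (S ∪ C') = S := by
        ext x; simp only [Finset.mem_inter, Finset.mem_insert, Finset.mem_union]
        constructor
        · rintro ⟨rfl | h, hx | hx⟩ <;> first | exact absurd ‹_› haS | assumption |
            exact absurd ‹_› (by simp_all)
        · exact fun h => ⟨Or.inr h, Or.inl h⟩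
      rw [hu, hi] at hkey
      have hmarg := H a haS
      have h2 : insert a C' \ S = insert a (C' \ S) := by
        ext x; simp only [Finset.mem_sdiff, Finset.mem_insert]
        constructor
        · rintro ⟨rfl | h, hx⟩
          · exact Or.inl rfl
          · exact Or.inr ⟨h, hx⟩
        · rintro (rfl | ⟨h, hx⟩)
          · exact ⟨Or.inl rfl, haS⟩
          · exact ⟨Or.inr h, hx⟩
      have haC'S : a ∉ C' \ S := fun h => ha (Finset.mem_sdiff.mp h).1
      have hcard : ((insert a C' \ S).card : ℝ) = ((C' \ S).card : ℝ) + 1 := by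
        rw [h2, Finset.card_insert_of_notMem haC'S]; push_cast; ring
      rw [h1, hcard]
      calc f (insert a (S ∪ C')) ≤ f (insert a S) + f (S ∪ C') - f S := by linarith
        _ ≤ (f S + τ) + (f S + ((C' \ S).card : ℝ) * τ) - f S := by
            have := H a haS; linarith
        _ = f S + (((C' \ S).card : ℝ) + 1) * τ := by ring

theorem stmt_6 {Ω : Type*} [DecidableEq Ω] [Fintype Ω] (f : Finset Ω → ℝ)
    (hsub : Submodular f) (hnonneg : ∀ X : Finset Ω, 0 ≤ f X) (h0 : f ∅ = 0)
    (τ : ℝ) (hτ : 0 < τ) (k : ℕ) (L : List Ω) (hnodup : L.Nodup)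
    (hall : ∀ x : Ω, x ∈ L)
    (S : Finset Ω) (hS : S = L.foldl (thresholdStep f τ k) ∅) :
    (S.card = k ∧ τ * k ≤ f S) ∨
      (∀ C : Finset Ω, f (S ∪ C) - (C.card : ℝ) * τ ≤ f S) := by
  have hcardle : S.card ≤ k := by
    rw [hS]; exact foldl_card_le f τ k L ∅ (by simp)
  rcases eq_or_lt_of_le hcardle with heq | hlt
  · left
    refine ⟨heq, ?_⟩
    have := foldl_value f τ k hτ L ∅ (by simp [h0])
    rw [← hS] at this
    rw [← heq]
    exact_mod_cast this
  · right
    intro C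
    have H : ∀ e : Ω, e ∉ S → f (insert e S) - f S < τ := by
      intro e he
      obtain ⟨B, hBS, hB⟩ := by
        have := rejection f τ k L ∅ e (hall e) (hS ▸ he) (hS ▸ hlt)
        rw [← hS] at this
        exact this
      exact lt_of_le_of_lt (marg_mono hsub hBS he) hB
    have key := sum_marg hsub hτ.le H C
    have hle : ((C \ S).card : ℝ) ≤ (C.card : ℝ) := by
      exact_mod_cast Finset.card_le_card (Finset.sdiff_subset)
    nlinarith [hτ.le]
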